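/- Let D be a finite strongly connected digraph and let P be a directed path in D from a vertex u to a vertex v. Then the digraph obtained from D by reversing every arc of P is strongly connected if and only if u two-reaches v in D, that is, if and only if there exist two arc-disjoint directed paths from u to v in D. -/

import Mathlib

/-- An orientation of an undirected simple graph `G`: each edge is assigned
exactly one direction, giving the arc relation `arc`. -/
structure GraphOrientation {V : Type*} (G : SimpleGraph V) where
  arc : V → V → Prop
  adj_iff : ∀ u v, G.Adj u v ↔ (arc u v ∨ arc v u)
  asymm : ∀ u v, arc u v → ¬ arc v u

/-- The indegree of a vertex in an orientation. -/
noncomputable def indeg {V : Type*} {G : SimpleGraph V} (D : GraphOrientation G) (v : V) : ℕ :=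
  {u | D.arc u v}.ncard

/-- The list of consecutive arcs of a path given as a list of vertices. -/
def pathArcs {V : Type*} (p : List V) : List (V × V) := p.zip p.tail

/-- The list of arcs of a cycle given as a list of (distinct) vertices,
including the closing arc from the last vertex back to the first. -/
def cycleArcs {V : Type*} (p : List V) : List (V × V) := p.zip (p.rotate 1)

/-- `p` is a (simple) directed path from `u` to `v` with respect to the arc relation `A`. -/
def IsDipath {V : Type*} (A : V → V → Prop) (p : List V) (u v : V) : Prop :=
  p.head? = some u ∧ p.getLast? = some v ∧ p.Nodup ∧ p.Chain' A

/-- `D'` is obtained from `D` by reversing exactly the arcs in the list `A`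
(all of which must be arcs of `D`). -/
def ReversalAlong {V : Type*} {G : SimpleGraph V} (D D' : GraphOrientation G)
    (A : List (V × V)) : Prop :=
  (∀ a ∈ A, D.arc a.1 a.2) ∧ ∀ u v, D'.arc u v ↔ ((D.arc u v ∧ (u, v) ∉ A) ∨ (v, u) ∈ A)

/-- `D'` is obtained from `D` by reversing every arc of some directed cycle. -/
def CycleReversal {V : Type*} {G : SimpleGraph V} (D D' : GraphOrientation G) : Prop :=
  ∃ p : List V, p ≠ [] ∧ p.Nodup ∧ ReversalAlong D D' (cycleArcs p)

/-- `D'` is obtained from `D` by a weak reversal: reversing a directed path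
from `u` to `v` where `δ(u) = δ(v) - 1`. -/
def WeakReversal {V : Type*} {G : SimpleGraph V} (D D' : GraphOrientation G) : Prop :=
  ∃ (p : List V) (u v : V), IsDipath D.arc p u v ∧ indeg D u + 1 = indeg D v ∧
    ReversalAlong D D' (pathArcs p)

/-- `D` contains no reversible path, i.e. no directed path from `u` to `v`
with `δ(u) < δ(v) - 1`. -/
def NoReversiblePath {V : Type*} {G : SimpleGraph V} (D : GraphOrientation G) : Prop :=
  ∀ u v : V, Relation.ReflTransGen D.arc u v → indeg D v ≤ indeg D u + 1

/-- The indegree sequence of an orientation, sorted in decreasing order. -/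
noncomputable def degSeq {V : Type*} [Fintype V] {G : SimpleGraph V}
    (D : GraphOrientation G) : List ℕ :=
  ((Finset.univ.val.map (indeg D)).sort (· ≤ ·)).reverse

/-- Lexicographic (non-strict) comparison of lists of naturals. -/
def lexLE (l₁ l₂ : List ℕ) : Prop := l₁ = l₂ ∨ List.Lex (· < ·) l₁ l₂

/-- `u` two-reaches `v`: there are two arc-disjoint directed paths from `u` to `v`. -/
def TwoReaches {V : Type*} (A : V → V → Prop) (u v : V) : Prop :=
  ∃ p q : List V, IsDipath A p u v ∧ IsDipath A q u v ∧ ∀ a ∈ pathArcs p, a ∉ pathArcs q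

/-- Reachability inside the induced subgraph `G[U]`. -/
def ReachIn {V : Type*} (G : SimpleGraph V) (U : Set V) (x y : V) : Prop :=
  Relation.ReflTransGen (fun a b => a ∈ U ∧ b ∈ U ∧ G.Adj a b) x y

/-- `C` is a connected component of the induced undirected subgraph `G[U]`. -/
def IsCompOf {V : Type*} (G : SimpleGraph V) (U C : Set V) : Prop :=
  ∃ x ∈ U, C = {y | ReachIn G U x y}

namespace Scratch
variable {V : Type*}

lemma pathArcs_nil : pathArcs ([] : List V) = [] := rfl
lemma pathArcs_single (a : V) : pathArcs [a] = [] := rfl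
lemma pathArcs_cons₂ (a b : V) (l : List V) :
    pathArcs (a :: b :: l) = (a, b) :: pathArcs (b :: l) := rfl

lemma mem_pathArcs_iff {l : List V} {a b : V} :
    (a, b) ∈ pathArcs l ↔ ∃ i, ∃ h : i + 1 < l.length, l[i] = a ∧ l[i+1] = b := by
  constructor
  · intro hmem
    induction l with
    | nil => simp [pathArcs_nil] at hmem
    | cons x t ih =>
      match t with
      | [] => simp [pathArcs_single] at hmem
      | y :: s =>
        rw [pathArcs_cons₂] at hmem
        rcases List.mem_cons.1 hmem with h | h
        · exact ⟨0, by simp, by simpa [Prod.ext_iff] using h.symm⟩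
        · obtain ⟨i, hi, h1, h2⟩ := ih h
          exact ⟨i+1, by simpa using hi, by simpa using h1, by simpa using h2⟩
  · rintro ⟨i, h, h1, h2⟩
    have hlen : i < (l.zip l.tail).length := by
      simp [List.length_zip, List.length_tail]; omega
    have : (l.zip l.tail)[i] = (a, b) := by
      rw [List.getElem_zip]
      refine Prod.ext ?_ ?_
      · simpa using h1
      · simp only []
        rw [List.getElem_tail]
        exact h2
    have hm := List.getElem_mem hlen
    rw [this] at hm
    exact hm


lemma rel_of_mem_pathArcs {R : V → V → Prop} {l : List V} {a b : V}
    (hc : l.Chain' R) (h : (a, b) ∈ pathArcs l) : R a b := by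
  obtain ⟨i, hi, h1, h2⟩ := mem_pathArcs_iff.1 h
  have := List.isChain_iff_getElem.1 hc i (by omega)
  simpa [List.get_eq_getElem, h1, h2] using this

lemma no_rev_arc {l : List V} (hl : l.Nodup) {a b : V}
    (h1 : (a, b) ∈ pathArcs l) (h2 : (b, a) ∈ pathArcs l) : False := by
  obtain ⟨i, hi, hi1, hi2⟩ := mem_pathArcs_iff.1 h1
  obtain ⟨k, hk, hk1, hk2⟩ := mem_pathArcs_iff.1 h2
  have e1 : l[i] = l[k+1]'(by omega) := by rw [hi1, hk2]
  have e2 : l[i+1] = l[k]'(by omega) := by rw [hi2, hk1]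
  rw [hl.getElem_inj_iff] at e1 e2
  omega

lemma backward_chain {R : V → V → Prop} {l : List V}
    (hR : ∀ i, (h : i + 1 < l.length) → R l[i+1] l[i]) :
    ∀ {i k : ℕ}, i ≤ k → (hk : k < l.length) → (hik : i < l.length) →
      Relation.ReflTransGen R (l[k]'hk) (l[i]'hik) := by
  intro i k hik
  induction k, hik using Nat.le_induction with
  | base => intro hk _; exact Relation.ReflTransGen.refl
  | succ k hik ih =>
    intro hk hik2
    have h1 : R l[k+1] l[k] := hR k hk
    exact Relation.ReflTransGen.head h1 (ih (by omega) hik2)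

lemma exists_crossing {R : V → V → Prop} {X : V → Prop} :
    ∀ {l : List V} {a b : V}, l.Chain' R → l.head? = some a → l.getLast? = some b →
      X a → ¬ X b → ∃ x y, (x, y) ∈ pathArcs l ∧ X x ∧ ¬ X y ∧ R x y := by
  intro l
  induction l with
  | nil => intro a b _ h; simp at h
  | cons c t ih =>
    intro a b hc hh hl hXa hXb
    have hca : c = a := by simpa using hh
    subst hca
    cases t with
    | nil =>
      have : c = b := by simpa using hl
      exact absurd (this ▸ hXa) hXb
    | cons d s =>
      have hRcd : R c d := (List.isChain_cons_cons.1 hc).1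
      by_cases hXd : X d
      · obtain ⟨x, y, hm, h1, h2, h3⟩ :=
          ih (a := d) (b := b) (List.isChain_cons_cons.1 hc).2 rfl (by simpa using hl) hXd hXb
        exact ⟨x, y, by rw [pathArcs_cons₂]; exact List.mem_cons_of_mem _ hm, h1, h2, h3⟩
      · exact ⟨c, d, by rw [pathArcs_cons₂]; exact List.mem_cons_self, hXa, hXd, hRcd⟩

lemma dup_split : ∀ {l : List V}, ¬ l.Nodup →
    ∃ (a : V) (l₁ l₂ l₃ : List V), l = l₁ ++ a :: l₂ ++ a :: l₃ := by
  intro l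
  induction l with
  | nil => intro h; exact absurd List.nodup_nil h
  | cons b t ih =>
    intro h
    by_cases hb : b ∈ t
    · obtain ⟨s, r, rfl⟩ := List.append_of_mem hb
      exact ⟨b, [], s, r, rfl⟩
    · have : ¬ t.Nodup := fun hn => h (List.nodup_cons.2 ⟨hb, hn⟩)
      obtain ⟨a, l₁, l₂, l₃, rfl⟩ := ih this
      exact ⟨a, b :: l₁, l₂, l₃, rfl⟩


lemma head?_append_cons (s t : List V) (x : V) :
    (s ++ x :: t).head? = (s ++ [x]).head? := by
  cases s <;> simp

lemma getLast?_append_cons (s t : List V) (x : V) :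
    (s ++ x :: t).getLast? = (x :: t).getLast? := by
  rw [List.getLast?_append, List.getLast?_eq_getLast (l := x :: t) (by simp)]; rfl

lemma pathArcs_append_subset (s r : List V) (hr : r ≠ []) :
    ∀ a ∈ pathArcs r, a ∈ pathArcs (s ++ r) := by
  induction s with
  | nil => simp
  | cons b s' ih =>
    intro a ha
    have h1 := ih a ha
    have hne : s' ++ r ≠ [] := by
      intro h; exact hr (List.append_eq_nil_iff.1 h).2
    obtain ⟨c, m, hcm⟩ := List.exists_cons_of_ne_nil hne
    rw [List.cons_append, hcm, pathArcs_cons₂]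
    exact List.mem_cons_of_mem _ (hcm ▸ h1)

lemma dipath_of_chain {R : V → V → Prop} :
    ∀ (n : ℕ) (l : List V) (a b : V), l.length ≤ n → l.head? = some a →
      l.getLast? = some b → l.Chain' R → ∃ l', IsDipath R l' a b := by
  intro n
  induction n with
  | zero =>
    intro l a b hn hh _ _
    rw [List.length_eq_zero_iff.1 (Nat.le_zero.1 hn)] at hh
    simp at hh
  | succ n ih =>
    intro l a b hn hh hl hc
    by_cases hnd : l.Nodup
    · exact ⟨l, hh, hl, hnd, hc⟩
    · obtain ⟨c, l₁, l₂, l₃, rfl⟩ := dup_split hnd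
      refine ih (l₁ ++ c :: l₃) a b ?_ ?_ ?_ ?_
      · simp at hn ⊢; omega
      · have e : (l₁ ++ c :: l₃).head? = ((l₁ ++ c :: l₂) ++ c :: l₃).head? := by
          cases l₁ <;> simp
        rw [e]
        exact hh
      · rw [getLast?_append_cons] at hl
        rw [getLast?_append_cons]
        exact hl
      · have h1 := List.isChain_split.1 hc
        have h1' : List.Chain' R (l₁ ++ c :: (l₂ ++ [c])) := by
          rw [List.append_assoc] at h1
          exact h1.1
        exact List.isChain_split.2 ⟨(List.isChain_split.1 h1').1, h1.2⟩

lemma walk_of_rtg {R : V → V → Prop} {a b : V} (h : Relation.ReflTransGen R a b) :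
    ∃ l : List V, l.head? = some a ∧ l.getLast? = some b ∧ l.Chain' R := by
  induction h with
  | refl => exact ⟨[a], rfl, rfl, List.isChain_singleton a⟩
  | tail hab hbc ih =>
    obtain ⟨l, hh, hl, hc⟩ := ih
    refine ⟨l ++ [_], ?_, List.getLast?_concat (l := l), ?_⟩
    · rw [List.head?_append, hh]; rfl
    · exact hc.append (List.isChain_singleton _) (by
        intro x hx y hy
        simp at hy
        rw [hl] at hx
        simp at hx
        rw [← hx, ← hy]
        exact hbc)

lemma dipath_of_rtg {R : V → V → Prop} {a b : V} (h : Relation.ReflTransGen R a b) :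
    ∃ l, IsDipath R l a b := by
  obtain ⟨l, hh, hl, hc⟩ := walk_of_rtg h
  exact dipath_of_chain l.length l a b le_rfl hh hl hc

lemma dipath_suffix {R : V → V → Prop} {l : List V} {a b x : V}
    (h : IsDipath R l a b) (hx : x ∈ l) :
    ∃ l', IsDipath R l' x b ∧ ∀ e ∈ pathArcs l', e ∈ pathArcs l := by
  obtain ⟨hh, hl, hnd, hc⟩ := h
  obtain ⟨s, t, rfl⟩ := List.append_of_mem hx
  refine ⟨x :: t, ⟨rfl, ?_, ?_, ?_⟩, ?_⟩
  · rw [getLast?_append_cons] at hl; exact hl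
  · exact hnd.sublist (List.sublist_append_right s (x :: t))
  · exact (List.isChain_split.1 hc).2
  · exact pathArcs_append_subset s (x :: t) (by simp)

lemma dipath_cons {R : V → V → Prop} {l : List V} {x b w : V}
    (h : IsDipath R l x b) (hR : R w x) (hw : w ∉ l) :
    IsDipath R (w :: l) w b ∧ pathArcs (w :: l) = (w, x) :: pathArcs l := by
  obtain ⟨hh, hl, hnd, hc⟩ := h
  obtain ⟨c, t, rfl⟩ := List.exists_cons_of_ne_nil (show l ≠ [] by rintro rfl; simp at hh)
  have hcx : c = x := by simpa using hh
  subst hcx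
  refine ⟨⟨rfl, by simpa using hl, List.nodup_cons.2 ⟨hw, hnd⟩, List.isChain_cons_cons.2 ⟨hR, hc⟩⟩, rfl⟩


section Bal
variable [DecidableEq V]

noncomputable def bal (E : Finset (V × V)) (z : V) : ℤ :=
  ((E.filter (fun e => e.1 = z)).card : ℤ) - ((E.filter (fun e => e.2 = z)).card : ℤ)

lemma bal_erase {E : Finset (V × V)} {e : V × V} (he : e ∈ E) (z : V) :
    bal (E.erase e) z = bal E z - (if e.1 = z then 1 else 0) + (if e.2 = z then 1 else 0) := by
  unfold bal
  rw [Finset.filter_erase, Finset.filter_erase]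
  by_cases h1 : e.1 = z <;> by_cases h2 : e.2 = z
  all_goals
    simp only [h1, h2, if_true, if_false, eq_self_iff_true]
  · rw [Finset.card_erase_of_mem (by simp [he, h1]), Finset.card_erase_of_mem (by simp [he, h2])]
    have c1 : 0 < (E.filter (fun e => e.1 = z)).card := Finset.card_pos.2 ⟨e, by simp [he, h1]⟩
    have c2 : 0 < (E.filter (fun e => e.2 = z)).card := Finset.card_pos.2 ⟨e, by simp [he, h2]⟩
    push_cast [c1, c2]
    omega
  · rw [Finset.card_erase_of_mem (by simp [he, h1]), Finset.erase_eq_of_notMem (by simp [h2])]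
    have c1 : 0 < (E.filter (fun e => e.1 = z)).card := Finset.card_pos.2 ⟨e, by simp [he, h1]⟩
    push_cast [c1]
    omega
  · rw [Finset.erase_eq_of_notMem (by simp [h1]), Finset.card_erase_of_mem (by simp [he, h2])]
    have c2 : 0 < (E.filter (fun e => e.2 = z)).card := Finset.card_pos.2 ⟨e, by simp [he, h2]⟩
    push_cast [c2]
    omega
  · rw [Finset.erase_eq_of_notMem (by simp [h1]), Finset.erase_eq_of_notMem (by simp [h2])]
    ring


lemma bal_union {E F : Finset (V × V)} (h : Disjoint E F) (z : V) :
    bal (E ∪ F) z = bal E z + bal F z := by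
  unfold bal
  rw [Finset.filter_union, Finset.filter_union,
    Finset.card_union_of_disjoint (Finset.disjoint_filter_filter h),
    Finset.card_union_of_disjoint (Finset.disjoint_filter_filter h)]
  push_cast
  ring

lemma bal_sdiff {E F : Finset (V × V)} (h : F ⊆ E) (z : V) :
    bal (E \ F) z = bal E z - bal F z := by
  unfold bal
  have key : ∀ p : V × V → Prop, ∀ (_ : DecidablePred p),
      (E \ F).filter p = (E.filter p) \ (F.filter p) := by
    intro p hp
    ext e
    simp only [Finset.mem_sdiff, Finset.mem_filter]
    tauto
  rw [key _ inferInstance, key _ inferInstance,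
    Finset.card_sdiff_of_subset (Finset.filter_subset_filter _ h),
    Finset.card_sdiff_of_subset (Finset.filter_subset_filter _ h)]
  have c1 := Finset.card_le_card (Finset.filter_subset_filter (fun e => e.1 = z) h)
  have c2 := Finset.card_le_card (Finset.filter_subset_filter (fun e => e.2 = z) h)
  push_cast [c1, c2]
  ring

lemma mem_image_swap {F : Finset (V × V)} {e : V × V} :
    e ∈ F.image Prod.swap ↔ (e.2, e.1) ∈ F := by
  simp only [Finset.mem_image]
  constructor
  · rintro ⟨f, hf, rfl⟩; simpa using hf
  · intro h; exact ⟨(e.2, e.1), h, rfl⟩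

lemma bal_image_swap (F : Finset (V × V)) (z : V) :
    bal (F.image Prod.swap) z = - bal F z := by
  unfold bal
  have h1 : (F.image Prod.swap).filter (fun e => e.1 = z)
      = (F.filter (fun e => e.2 = z)).image Prod.swap := by
    ext ⟨a, b⟩
    simp only [Finset.mem_filter, mem_image_swap]
  have h2 : (F.image Prod.swap).filter (fun e => e.2 = z)
      = (F.filter (fun e => e.1 = z)).image Prod.swap := by
    ext ⟨a, b⟩
    simp only [Finset.mem_filter, mem_image_swap]
  rw [h1, h2, Finset.card_image_of_injective _ Prod.swap_injective,
    Finset.card_image_of_injective _ Prod.swap_injective]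
  ring

lemma bal_insert {E : Finset (V × V)} {e : V × V} (he : e ∉ E) (z : V) :
    bal (insert e E) z = bal E z + (if e.1 = z then 1 else 0) - (if e.2 = z then 1 else 0) := by
  have h := bal_erase (E := insert e E) (e := e) (Finset.mem_insert_self e E) z
  rw [Finset.erase_insert he] at h
  omega

lemma bal_toFinset_pathArcs :
    ∀ {l : List V}, l.Nodup → ∀ z, bal (pathArcs l).toFinset z =
      (if l.head? = some z then 1 else 0) - (if l.getLast? = some z then 1 else 0) := by
  intro l
  induction l with
  | nil => intro _ z; simp [pathArcs_nil, bal]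
  | cons x t ih =>
    intro hnd z
    cases t with
    | nil => simp [pathArcs_single, bal]
    | cons y s =>
      have hxt : x ∉ y :: s := (List.nodup_cons.1 hnd).1
      have hnd' : (y :: s).Nodup := (List.nodup_cons.1 hnd).2
      have hnm : (x, y) ∉ pathArcs (y :: s) := by
        intro hm
        exact hxt (List.of_mem_zip hm).1
      rw [pathArcs_cons₂]
      rw [List.toFinset_cons]
      rw [bal_insert (by simpa using hnm)]
      rw [ih hnd' z]
      have hl : (x :: y :: s).getLast? = (y :: s).getLast? := by
        rw [show x :: y :: s = [x] ++ y :: s from rfl, getLast?_append_cons]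
      rw [hl]
      simp only [List.head?_cons]
      by_cases hx : x = z <;> by_cases hy : y = z <;>
        simp [hx, hy] <;> omega


lemma exists_dipath_of_bal {A : V → V → Prop} (v : V) :
    ∀ (n : ℕ) (E : Finset (V × V)), E.card ≤ n → (∀ e ∈ E, A e.1 e.2) →
      (∀ z, z ≠ v → 0 ≤ bal E z) → ∀ w, (w = v ∨ 0 < bal E w) →
      ∃ l, IsDipath A l w v ∧ ∀ a ∈ pathArcs l, a ∈ E := by
  intro n
  induction n with
  | zero =>
    intro E hcard hE h1 w hw
    rcases hw with rfl | hw
    · exact ⟨[w], ⟨rfl, rfl, List.nodup_singleton w, List.isChain_singleton w⟩,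
        by simp [pathArcs_single]⟩
    · exfalso
      have : E = ∅ := Finset.card_eq_zero.1 (Nat.le_zero.1 hcard)
      subst this
      simp [bal] at hw
  | succ n ih =>
    intro E hcard hE h1 w hw
    rcases hw with rfl | hw
    · exact ⟨[w], ⟨rfl, rfl, List.nodup_singleton w, List.isChain_singleton w⟩,
        by simp [pathArcs_single]⟩
    · have houtd : 0 < (E.filter (fun e => e.1 = w)).card := by
        by_contra hc
        push_neg at hc
        have : (E.filter (fun e => e.1 = w)).card = 0 := Nat.le_zero.1 hc
        unfold bal at hw
        omega
      obtain ⟨e, he⟩ := Finset.card_pos.1 houtd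
      rw [Finset.mem_filter] at he
      obtain ⟨heE, he1⟩ := he
      set x := e.2 with hx
      have hcard' : (E.erase e).card ≤ n := by
        rw [Finset.card_erase_of_mem heE]
        omega
      have hE' : ∀ f ∈ E.erase e, A f.1 f.2 := fun f hf => hE f (Finset.mem_of_mem_erase hf)
      have h1' : ∀ z, z ≠ v → 0 ≤ bal (E.erase e) z := by
        intro z hz
        rw [bal_erase heE]
        by_cases h : e.1 = z
        · have : z = w := h ▸ he1.symm ▸ rfl
          subst this
          split_ifs <;> omega
        · have := h1 z hz
          split_ifs <;> omega
      have hxrec : x = v ∨ 0 < bal (E.erase e) x := by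
        by_cases hxv : x = v
        · exact Or.inl hxv
        · right
          rw [bal_erase heE]
          have h2 : (if e.2 = x then (1:ℤ) else 0) = 1 := by simp [hx]
          by_cases h : e.1 = x
          · rw [← he1, h] at hw
            simp [h, h2]
            omega
          · have := h1 x hxv
            simp [h, h2]
            omega
      obtain ⟨l, hl, hsub⟩ := ih (E.erase e) hcard' hE' h1' x hxrec
      by_cases hwl : w ∈ l
      · obtain ⟨l', hl', hsub'⟩ := dipath_suffix hl hwl
        exact ⟨l', hl', fun a ha => Finset.mem_of_mem_erase (hsub a (hsub' a ha))⟩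
      · have hAwx : A w x := by
          have := hE e heE
          rwa [he1] at this
        obtain ⟨hdp, harcs⟩ := dipath_cons hl hAwx hwl
        refine ⟨w :: l, hdp, ?_⟩
        intro a ha
        rw [harcs] at ha
        rcases List.mem_cons.1 ha with h | ha
        · have hwe : (w, x) = e := Prod.ext he1.symm rfl
          rw [h, hwe]
          exact heE
        · exact Finset.mem_of_mem_erase (hsub a ha)

end Bal

lemma getElem_zero_of_head? {l : List V} {a : V} (h : l.head? = some a) :
    ∃ h0 : 0 < l.length, l[0] = a := by
  cases l with
  | nil => simp at h
  | cons c t => exact ⟨by simp, by simpa using h⟩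

lemma getElem_last_of_getLast? {l : List V} {b : V} (h : l.getLast? = some b) :
    ∃ h0 : l.length - 1 < l.length, l[l.length - 1] = b := by
  have hne : l ≠ [] := by rintro rfl; simp at h
  have h0 : 0 < l.length := List.length_pos_iff.2 hne
  refine ⟨by omega, ?_⟩
  rw [← List.getLast_eq_getElem hne]
  rw [List.getLast?_eq_getLast hne] at h
  exact Option.some_injective _ h

end Scratch

-- In a finite strongly connected digraph, reversing a directed path from `u` to `v`
-- yields a strongly connected digraph if and only if `u` two-reaches `v`.


open Scratch

theorem stmt_8 {V : Type*} [Fintype V] (A A' : V → V → Prop)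
    (hsc : ∀ u v : V, Relation.ReflTransGen A u v)
    (p : List V) (u v : V) (hp : IsDipath A p u v)
    (hA' : ∀ x y : V, A' x y ↔ ((A x y ∧ (x, y) ∉ pathArcs p) ∨ (y, x) ∈ pathArcs p)) :
    (∀ x y : V, Relation.ReflTransGen A' x y) ↔ TwoReaches A u v := by
  classical
  obtain ⟨hph, hpl, hpnd, hpc⟩ := hp
  obtain ⟨hm, hu0⟩ := getElem_zero_of_head? hph
  obtain ⟨hmlast, hvlast⟩ := getElem_last_of_getLast? hpl
  have hA'p : ∀ {a b : V}, (a, b) ∈ pathArcs p → A' b a :=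
    fun h => (hA' _ _).2 (Or.inr h)
  have hA'n : ∀ {a b : V}, A a b → (a, b) ∉ pathArcs p → A' a b :=
    fun ha hn => (hA' _ _).2 (Or.inl ⟨ha, hn⟩)
  have hback : ∀ i k : ℕ, i ≤ k → (hk : k < p.length) → (hi : i < p.length) →
      Relation.ReflTransGen A' (p[k]'hk) (p[i]'hi) := by
    intro i k h hk hi
    exact backward_chain (fun j hj => hA'p (mem_pathArcs_iff.2 ⟨j, hj, rfl, rfl⟩)) h hk hi
  constructor
  · -- A' strongly connected → TwoReaches
    intro hsc'
    by_cases huv : u = v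
    · subst huv
      exact ⟨[u], [u], ⟨rfl, rfl, List.nodup_singleton u, List.isChain_singleton u⟩,
        ⟨rfl, rfl, List.nodup_singleton u, List.isChain_singleton u⟩,
        by simp [pathArcs_single]⟩
    · obtain ⟨q, hqh, hql, hqnd, hqc⟩ := dipath_of_rtg (hsc' u v)
      set P1 : Finset (V × V) := (pathArcs p).toFinset with hP1
      set P2 : Finset (V × V) := (pathArcs q).toFinset with hP2
      set E : Finset (V × V) :=
        (P1 \ P2.image Prod.swap) ∪ (P2 \ P1.image Prod.swap) with hEdef
      have hdisjE : Disjoint (P1 \ P2.image Prod.swap) (P2 \ P1.image Prod.swap) := by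
        rw [Finset.disjoint_left]
        intro e he1 he2
        rw [Finset.mem_sdiff] at he1 he2
        have hep : (e.1, e.2) ∈ pathArcs p := List.mem_toFinset.1 he1.1
        have heq : (e.1, e.2) ∈ pathArcs q := List.mem_toFinset.1 he2.1
        have hA'e : A' e.1 e.2 := rel_of_mem_pathArcs hqc heq
        rcases (hA' _ _).1 hA'e with ⟨_, hn⟩ | hr
        · exact hn hep
        · exact no_rev_arc hpnd hep hr
      have hEA : ∀ e ∈ E, A e.1 e.2 := by
        intro e he
        rcases Finset.mem_union.1 he with h | h
        · exact rel_of_mem_pathArcs hpc (List.mem_toFinset.1 (Finset.mem_sdiff.1 h).1)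
        · rw [Finset.mem_sdiff] at h
          have hA'e : A' e.1 e.2 := rel_of_mem_pathArcs hqc (List.mem_toFinset.1 h.1)
          rcases (hA' _ _).1 hA'e with ⟨ha, _⟩ | hr
          · exact ha
          · exact absurd (List.mem_toFinset.2 hr) (fun hc => h.2 (mem_image_swap.2 hc))
      have hbalP1 : ∀ z, bal P1 z = (if u = z then 1 else 0) - (if v = z then 1 else 0) := by
        intro z
        rw [hP1, bal_toFinset_pathArcs hpnd z, hph, hpl]
        simp
      have hbalP2 : ∀ z, bal P2 z = (if u = z then 1 else 0) - (if v = z then 1 else 0) := by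
        intro z
        rw [hP2, bal_toFinset_pathArcs hqnd z, hqh, hql]
        simp
      have hC : P1 ∩ P2.image Prod.swap = (P2 ∩ P1.image Prod.swap).image Prod.swap := by
        ext ⟨a, b⟩
        simp only [Finset.mem_inter, mem_image_swap]
        tauto
      have hbalE : ∀ z, bal E z =
          ((if u = z then 1 else 0) - (if v = z then 1 else 0)) +
          ((if u = z then 1 else 0) - (if v = z then 1 else 0)) := by
        intro z
        rw [hEdef, bal_union hdisjE]
        rw [← Finset.sdiff_inter_self_left P1 (P2.image Prod.swap),
          ← Finset.sdiff_inter_self_left P2 (P1.image Prod.swap)]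
        rw [bal_sdiff (Finset.inter_subset_left) z, bal_sdiff (Finset.inter_subset_left) z]
        rw [hC, bal_image_swap]
        rw [hbalP1, hbalP2]
        ring
      obtain ⟨r1, hr1, hsub1⟩ := exists_dipath_of_bal v E.card E le_rfl hEA
        (by
          intro z hz
          rw [hbalE z]
          have : ¬ (v = z) := fun h => hz h.symm
          split_ifs <;> omega)
        u (Or.inr (by
          rw [hbalE u]
          have : ¬ (v = u) := fun h => huv h.symm
          rw [if_pos rfl, if_neg this]
          norm_num))
      have hsubr1 : (pathArcs r1).toFinset ⊆ E := fun a ha => hsub1 a (List.mem_toFinset.1 ha)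
      have hbalr1 : ∀ z, bal ((pathArcs r1).toFinset) z =
          (if u = z then 1 else 0) - (if v = z then 1 else 0) := by
        intro z
        rw [bal_toFinset_pathArcs hr1.2.2.1 z, hr1.1, hr1.2.1]
        simp
      obtain ⟨r2, hr2, hsub2⟩ := exists_dipath_of_bal v (E \ (pathArcs r1).toFinset).card
        (E \ (pathArcs r1).toFinset) le_rfl
        (fun e he => hEA e (Finset.mem_sdiff.1 he).1)
        (by
          intro z hz
          rw [bal_sdiff hsubr1, hbalE z, hbalr1 z]
          have : ¬ (v = z) := fun h => hz h.symm
          split_ifs <;> omega)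
        u (Or.inr (by
          rw [bal_sdiff hsubr1, hbalE u, hbalr1 u]
          have : ¬ (v = u) := fun h => huv h.symm
          rw [if_pos rfl, if_neg this]
          norm_num))
      refine ⟨r1, r2, hr1, hr2, ?_⟩
      intro a ha hb
      have := Finset.mem_sdiff.1 (hsub2 a hb)
      exact this.2 (List.mem_toFinset.2 ha)
  · -- TwoReaches → A' strongly connected
    intro htw
    obtain ⟨q1, q2, hq1, hq2, hdisj⟩ := htw
    have stepA : Relation.ReflTransGen A' u v := by
      by_contra hv
      obtain ⟨x1, y1, hm1, hX1, hY1, hA1⟩ :=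
        exists_crossing (X := fun z => Relation.ReflTransGen A' u z)
          hq1.2.2.2 hq1.1 hq1.2.1 Relation.ReflTransGen.refl hv
      obtain ⟨x2, y2, hm2, hX2, hY2, hA2⟩ :=
        exists_crossing (X := fun z => Relation.ReflTransGen A' u z)
          hq2.2.2.2 hq2.1 hq2.2.1 Relation.ReflTransGen.refl hv
      have hp1 : (x1, y1) ∈ pathArcs p := by
        by_contra hc
        exact hY1 (hX1.tail (hA'n hA1 hc))
      have hp2 : (x2, y2) ∈ pathArcs p := by
        by_contra hc
        exact hY2 (hX2.tail (hA'n hA2 hc))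
      obtain ⟨i, hi, hi1, hi2⟩ := mem_pathArcs_iff.1 hp1
      obtain ⟨k, hk, hk1, hk2⟩ := mem_pathArcs_iff.1 hp2
      rcases lt_trichotomy i k with h | h | h
      · have hb : Relation.ReflTransGen A' (p[k]'(by omega)) (p[i+1]'hi) :=
          hback (i+1) k (by omega) (by omega) hi
        rw [hk1, hi2] at hb
        exact hY1 (hX2.trans hb)
      · subst h
        have ex : (x1, y1) = (x2, y2) := by
          rw [← hi1, ← hi2, ← hk1, ← hk2]
        exact hdisj (x1, y1) hm1 (ex ▸ hm2)
      · have hb : Relation.ReflTransGen A' (p[i]'(by omega)) (p[k+1]'hk) :=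
          hback (k+1) i (by omega) (by omega) hk
        rw [hi1, hk2] at hb
        exact hY2 (hX1.trans hb)
    have lift : ∀ x y : V, Relation.ReflTransGen A x y → Relation.ReflTransGen A' x y := by
      intro x y hxy
      induction hxy with
      | refl => exact Relation.ReflTransGen.refl
      | @tail b c hab hbc ih =>
        refine ih.trans ?_
        by_cases hc : (b, c) ∈ pathArcs p
        · obtain ⟨i, hi, h1, h2⟩ := mem_pathArcs_iff.1 hc
          have r1 : Relation.ReflTransGen A' (p[i]'(by omega)) (p[0]'hm) :=
            hback 0 i (Nat.zero_le i) (by omega) hm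
          have r3 : Relation.ReflTransGen A' (p[p.length - 1]'hmlast) (p[i+1]'hi) :=
            hback (i+1) (p.length - 1) (by omega) hmlast hi
          rw [h1, hu0] at r1
          rw [h2, hvlast] at r3
          exact (r1.trans stepA).trans r3
        · exact Relation.ReflTransGen.single (hA'n hbc hc)
    exact fun x y => lift x y (hsc x y)
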